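/- Let d ≥ 2, l ≥ 2, β ∈ (0,1/d), ρ ∈ (0,β), θ ∈ (max{0, 2lβ - lρ - l/d}, lβ - lρ). Then the second partial derivative ∂²Ψ/∂ρ² = -1/ρ + (l-1)/(1-2β+ρ) + 2(l-1)/(β-ρ) - 2l/(β-ρ-θ/l) - ld/(1-2βd+ρd+θd/l) is strictly negative. -/

import Mathlib

open Real

private lemma mul_log_deriv {u : ℝ → ℝ} {c x : ℝ} (hu : HasDerivAt u c x)
    (hne : u x ≠ 0) :
    HasDerivAt (fun t => u t * Real.log (u t)) (c * (Real.log (u x) + 1)) x := by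
  have h := hu.mul (hu.log hne)
  refine h.congr_deriv ?_
  field_simp

set_option maxHeartbeats 1000000 in
/-- On the admissible region, the second partial derivative of `Ψ` in `ρ` equals the
explicit expression, which is strictly negative. -/
theorem Psi_rho_second_deriv_neg (d l : ℕ) (hd : 2 ≤ d) (hl : 2 ≤ l)
    (β ρ θ : ℝ) (hβ : β ∈ Set.Ioo (0 : ℝ) (1 / d)) (hρ : ρ ∈ Set.Ioo (0 : ℝ) β)
    (hθ : θ ∈ Set.Ioo (max 0 (2 * l * β - l * ρ - l / d)) ((l : ℝ) * β - l * ρ))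
    (Ψ : ℝ → ℝ → ℝ)
    (hΨ : Ψ = fun ρ θ => -ρ * Real.log ρ - θ * Real.log (θ / l)
      + ((l : ℝ) - 1) * (1 - 2 * β + ρ) * Real.log (1 - 2 * β + ρ)
      + θ * Real.log ((d : ℝ) - 1)
      + 2 * ((l : ℝ) - 1) * (β - ρ) * Real.log (β - ρ)
      - 2 * l * (β - ρ - θ / l) * Real.log (β - ρ - θ / l)
      - ((l : ℝ) / d) * (1 - 2 * β * d + ρ * d + (θ / l) * d)
          * Real.log (1 - 2 * β * d + ρ * d + (θ / l) * d)) :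
    deriv (deriv (fun ρ' => Ψ ρ' θ)) ρ =
      -1 / ρ + ((l : ℝ) - 1) / (1 - 2 * β + ρ) + 2 * ((l : ℝ) - 1) / (β - ρ)
        - 2 * l / (β - ρ - θ / l) - (l : ℝ) * d / (1 - 2 * β * d + ρ * d + θ * d / l) ∧
    deriv (deriv (fun ρ' => Ψ ρ' θ)) ρ < 0 := by
  -- basic numeric facts
  have hd0 : (0:ℝ) < d := by positivity
  have hl0 : (0:ℝ) < l := by positivity
  have hd2 : (2:ℝ) ≤ d := by exact_mod_cast hd
  have hl2 : (2:ℝ) ≤ l := by exact_mod_cast hl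
  obtain ⟨hβ0, hβd⟩ := hβ
  obtain ⟨hρ0, hρβ⟩ := hρ
  obtain ⟨hθlo, hθhi⟩ := hθ
  have hθ0 : 0 < θ := lt_of_le_of_lt (le_max_left _ _) hθlo
  have hθlo' : 2 * l * β - l * ρ - l / d < θ := lt_of_le_of_lt (le_max_right _ _) hθlo
  have hβhalf : β < 1 / 2 := lt_of_lt_of_le hβd (by
    rw [div_le_div_iff₀ hd0 (by norm_num)]; linarith)
  have hβd1 : β * d < 1 := (lt_div_iff₀ hd0).mp hβd
  -- positivity of denominators
  have hA : 0 < 1 - 2 * β + ρ := by linarith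
  have hB : 0 < β - ρ := by linarith
  have hθl : θ / l < β - ρ := by
    rw [div_lt_iff₀ hl0]; nlinarith
  have hθl0 : 0 < θ / l := div_pos hθ0 hl0
  have hC : 0 < β - ρ - θ / l := by linarith
  have hXd : 2 * l * β * d - l * ρ * d - l < θ * d := by
    have h1 := mul_lt_mul_of_pos_right hθlo' hd0
    have h2 : (2 * l * β - l * ρ - l / d) * d = 2 * l * β * d - l * ρ * d - l := by
      field_simp
    linarith [h2 ▸ h1]
  have hX : 0 < 1 - 2 * β * d + ρ * d + θ * d / l := by
    rw [show (1 - 2 * β * d + ρ * d + θ * d / l)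
        = ((l:ℝ) - 2 * l * β * d + l * ρ * d + θ * d) / l by field_simp]
    apply div_pos _ hl0
    nlinarith
  have hX' : 0 < 1 - 2 * β * d + ρ * d + θ / l * d := by
    have : θ / l * (d:ℝ) = θ * d / l := by ring
    linarith [this ▸ hX]
  -- the first-derivative function
  set g : ℝ → ℝ := fun t => -(Real.log t + 1)
      + ((l:ℝ) - 1) * (Real.log (1 - 2 * β + t) + 1)
      - 2 * ((l:ℝ) - 1) * (Real.log (β - t) + 1)
      + 2 * (l:ℝ) * (Real.log (β - t - θ / l) + 1)
      - (l:ℝ) * (Real.log (1 - 2 * β * d + t * d + θ / l * d) + 1) with hg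
  -- open set on which everything is differentiable
  set S : Set ℝ := {x | 0 < x} ∩ {x | 0 < 1 - 2 * β + x} ∩ {x | 0 < β - x}
      ∩ {x | 0 < β - x - θ / l} ∩ {x | 0 < 1 - 2 * β * d + x * d + θ / l * d} with hSdef
  have hSopen : IsOpen S := by
    apply IsOpen.inter
    apply IsOpen.inter
    apply IsOpen.inter
    apply IsOpen.inter
    · exact isOpen_lt continuous_const continuous_id
    · exact isOpen_lt continuous_const (by continuity)
    · exact isOpen_lt continuous_const (by continuity)
    · exact isOpen_lt continuous_const (by continuity)
    · exact isOpen_lt continuous_const (by continuity)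
  have hρS : ρ ∈ S := ⟨⟨⟨⟨hρ0, hA⟩, hB⟩, hC⟩, hX'⟩
  -- the rewritten function
  have hfun : (fun ρ' => Ψ ρ' θ) = fun t =>
      -(t * Real.log t) - θ * Real.log (θ / l)
      + ((l:ℝ) - 1) * ((1 - 2 * β + t) * Real.log (1 - 2 * β + t))
      + θ * Real.log ((d:ℝ) - 1)
      + 2 * ((l:ℝ) - 1) * ((β - t) * Real.log (β - t))
      - 2 * (l:ℝ) * ((β - t - θ / l) * Real.log (β - t - θ / l))
      - ((l:ℝ) / d) * ((1 - 2 * β * d + t * d + θ / l * d)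
          * Real.log (1 - 2 * β * d + t * d + θ / l * d)) := by
    funext t
    simp only [hΨ]
    ring
  -- derivative at each point of S
  have key : ∀ y ∈ S, HasDerivAt (fun ρ' => Ψ ρ' θ) (g y) y := by
    intro y hy
    obtain ⟨⟨⟨⟨hy0, hyA⟩, hyB⟩, hyC⟩, hyX⟩ := hy
    have hu1 : HasDerivAt (fun t : ℝ => t) 1 y := hasDerivAt_id y
    have hu3 : HasDerivAt (fun t : ℝ => 1 - 2 * β + t) 1 y :=
      (hasDerivAt_id y).const_add (1 - 2 * β)
    have hu5 : HasDerivAt (fun t : ℝ => β - t) (-1) y :=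
      (hasDerivAt_id y).const_sub β
    have hu6 : HasDerivAt (fun t : ℝ => β - t - θ / l) (-1) y :=
      hu5.sub_const (θ / l)
    have hu7 : HasDerivAt (fun t : ℝ => 1 - 2 * β * d + t * d + θ / l * d) (1 * d) y :=
      (((hasDerivAt_id y).mul_const (d:ℝ)).const_add (1 - 2 * β * d)).add_const (θ / l * d)
    have hdne : (d:ℝ) ≠ 0 := ne_of_gt hd0
    have h1 : HasDerivAt (fun t : ℝ => -(t * Real.log t)) (-(Real.log y + 1)) y := by
      refine (mul_log_deriv hu1 (ne_of_gt hy0)).neg.congr_deriv ?_; ring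
    have h3 : HasDerivAt (fun t : ℝ => ((l:ℝ) - 1) * ((1 - 2 * β + t) * Real.log (1 - 2 * β + t)))
        (((l:ℝ) - 1) * (Real.log (1 - 2 * β + y) + 1)) y := by
      refine ((mul_log_deriv hu3 (ne_of_gt hyA)).const_mul ((l:ℝ) - 1)).congr_deriv ?_; ring
    have h5 : HasDerivAt (fun t : ℝ => 2 * ((l:ℝ) - 1) * ((β - t) * Real.log (β - t)))
        (-(2 * ((l:ℝ) - 1) * (Real.log (β - y) + 1))) y := by
      refine ((mul_log_deriv hu5 (ne_of_gt hyB)).const_mul (2 * ((l:ℝ) - 1))).congr_deriv ?_; ring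
    have h6 : HasDerivAt (fun t : ℝ => 2 * (l:ℝ) * ((β - t - θ / l) * Real.log (β - t - θ / l)))
        (-(2 * (l:ℝ) * (Real.log (β - y - θ / l) + 1))) y := by
      refine ((mul_log_deriv hu6 (ne_of_gt hyC)).const_mul (2 * (l:ℝ))).congr_deriv ?_; ring
    have h7 : HasDerivAt (fun t : ℝ => ((l:ℝ) / d) * ((1 - 2 * β * d + t * d + θ / l * d)
          * Real.log (1 - 2 * β * d + t * d + θ / l * d)))
        ((l:ℝ) * (Real.log (1 - 2 * β * d + y * d + θ / l * d) + 1)) y := by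
      refine ((mul_log_deriv hu7 (ne_of_gt hyX)).const_mul ((l:ℝ) / d)).congr_deriv ?_
      field_simp
    have hbig := ((((h1.sub_const (θ * Real.log (θ / l))).add h3).add_const
        (θ * Real.log ((d:ℝ) - 1))).add h5).sub h6 |>.sub h7
    rw [hfun]
    refine hbig.congr_deriv ?_
    rw [hg]
    ring
  -- eventual equality of derivatives
  have hev : deriv (fun ρ' => Ψ ρ' θ) =ᶠ[nhds ρ] g := by
    filter_upwards [hSopen.mem_nhds hρS] with y hy
    exact (key y hy).deriv
  have hder2 : deriv (deriv (fun ρ' => Ψ ρ' θ)) ρ = deriv g ρ := hev.deriv_eq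
  -- derivative of g at ρ
  have hu3ρ : HasDerivAt (fun t : ℝ => 1 - 2 * β + t) 1 ρ :=
    (hasDerivAt_id ρ).const_add (1 - 2 * β)
  have hu5ρ : HasDerivAt (fun t : ℝ => β - t) (-1) ρ :=
    (hasDerivAt_id ρ).const_sub β
  have hu6ρ : HasDerivAt (fun t : ℝ => β - t - θ / l) (-1) ρ :=
    hu5ρ.sub_const (θ / l)
  have hu7ρ : HasDerivAt (fun t : ℝ => 1 - 2 * β * d + t * d + θ / l * d) (1 * d) ρ :=
    (((hasDerivAt_id ρ).mul_const (d:ℝ)).const_add (1 - 2 * β * d)).add_const (θ / l * d)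
  have k1 := (((Real.hasDerivAt_log (ne_of_gt hρ0)).add_const (1:ℝ)).neg)
  have k3 := ((hu3ρ.log (ne_of_gt hA)).add_const (1:ℝ)).const_mul ((l:ℝ) - 1)
  have k5 := ((hu5ρ.log (ne_of_gt hB)).add_const (1:ℝ)).const_mul (2 * ((l:ℝ) - 1))
  have k6 := ((hu6ρ.log (ne_of_gt hC)).add_const (1:ℝ)).const_mul (2 * (l:ℝ))
  have k7 := ((hu7ρ.log (ne_of_gt hX')).add_const (1:ℝ)).const_mul ((l:ℝ))
  have hgder := (((k1.add k3).sub k5).add k6).sub k7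
  have hgval : deriv g ρ =
      -1 / ρ + ((l:ℝ) - 1) / (1 - 2 * β + ρ) + 2 * ((l:ℝ) - 1) / (β - ρ)
        - 2 * l / (β - ρ - θ / l)
        - (l:ℝ) * d / (1 - 2 * β * d + ρ * d + θ * d / l) := by
    rw [hg]
    erw [HasDerivAt.deriv hgder]
    have hdne : (d:ℝ) ≠ 0 := ne_of_gt hd0
    have hlne : (l:ℝ) ≠ 0 := ne_of_gt hl0
    field_simp
    ring
  have heq : deriv (deriv (fun ρ' => Ψ ρ' θ)) ρ =
      -1 / ρ + ((l:ℝ) - 1) / (1 - 2 * β + ρ) + 2 * ((l:ℝ) - 1) / (β - ρ)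
        - 2 * l / (β - ρ - θ / l)
        - (l:ℝ) * d / (1 - 2 * β * d + ρ * d + θ * d / l) := by
    rw [hder2, hgval]
  refine ⟨heq, ?_⟩
  rw [heq]
  -- negativity
  set A := 1 - 2 * β + ρ with hAdef
  set Bv := β - ρ with hBdef
  set C := β - ρ - θ / l with hCdef
  set X := 1 - 2 * β * d + ρ * d + θ * d / l with hXdef
  have hXdA : X < d * A := by
    have h1 : θ / l * d < (β - ρ) * d := mul_lt_mul_of_pos_right hθl hd0
    have h2 : (β - ρ) * d ≤ β * d := by nlinarith
    have h3 : θ * d / l = θ / l * d := by ring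
    rw [hXdef, hAdef]
    nlinarith
  have i1 : ((l:ℝ) - 1) / A < (l:ℝ) * d / X := by
    have e2 : (l:ℝ) * d / (d * A) < l * d / X :=
      div_lt_div_of_pos_left (by positivity) hX hXdA
    have e1 : (l:ℝ) * d / (d * A) = l / A := by
      rw [mul_comm (d:ℝ) A, mul_div_mul_right _ _ (ne_of_gt hd0)]
    have e3 : ((l:ℝ) - 1) / A < l / A := by
      apply div_lt_div_of_pos_right (by linarith) hA
    linarith [e1 ▸ e2]
  have hCB : C < Bv := by rw [hCdef, hBdef]; linarith
  have i2 : 2 * ((l:ℝ) - 1) / Bv < 2 * (l:ℝ) / C := by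
    have e2 : 2 * (l:ℝ) / Bv < 2 * l / C :=
      div_lt_div_of_pos_left (by positivity) hC hCB
    have e3 : 2 * ((l:ℝ) - 1) / Bv < 2 * l / Bv := by
      apply div_lt_div_of_pos_right (by linarith) hB
    linarith
  have i0 : -1 / ρ < 0 := div_neg_of_neg_of_pos (by norm_num) hρ0
  linarith
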